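/- Let d ≥ 2 and let x_1, ..., x_d be nonnegative real numbers. For every proper subset J of {1,...,d} (with the convention that the maximum over the empty set is 0), the alternating sum S(J) := Σ_{L : J ⊆ L ⊆ {1,...,d}} (-1)^{|L \ J| + 1} · max_{j ∈ L} x_j is nonnegative. -/

import Mathlib

open Finset

lemma key_ie {ι : Type*} [DecidableEq ι] (y : ι → NNReal) :
    ∀ (K : Finset ι) (hK : K.Nonempty) (a : NNReal),
      ∑ M ∈ K.powerset, (-1:ℝ)^M.card * ((a ⊔ M.sup y : NNReal) : ℝ)
        = (a : ℝ) - ((K.inf' hK fun k => a ⊔ y k : NNReal) : ℝ) := by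
  intro K hK
  induction hK using Finset.Nonempty.cons_induction with
  | singleton k =>
      intro a
      have hpow : ({k} : Finset ι).powerset = (insert k (∅ : Finset ι)).powerset := rfl
      rw [hpow, Finset.sum_powerset_insert (Finset.notMem_empty k)]
      simp
      ring
  | cons k K' h hK' ih =>
      intro a
      have hpow : (Finset.cons k K' h).powerset = (insert k K').powerset := by
        rw [Finset.cons_eq_insert]
      rw [hpow, Finset.sum_powerset_insert h, ih a]
      have h2 : ∑ M ∈ K'.powerset, (-1:ℝ)^(insert k M).card * ((a ⊔ (insert k M).sup y : NNReal) : ℝ)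
          = -∑ M ∈ K'.powerset, (-1:ℝ)^M.card * (((a ⊔ y k) ⊔ M.sup y : NNReal) : ℝ) := by
        rw [← Finset.sum_neg_distrib]
        apply Finset.sum_congr rfl
        intro M hM
        have hkM : k ∉ M := fun hk => h (Finset.mem_powerset.mp hM hk)
        rw [Finset.card_insert_of_notMem hkM, Finset.sup_insert, ← sup_assoc]
        ring
      rw [h2, ih (a ⊔ y k)]
      have h3 : K'.inf' hK' (fun j => (a ⊔ y k) ⊔ y j) = (a ⊔ y k) ⊔ K'.inf' hK' (fun j => a ⊔ y j) := by
        rw [Finset.inf'_sup_distrib_left]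
        apply Finset.inf'_congr _ rfl
        intro j hj
        rw [sup_sup_sup_comm, sup_idem, sup_assoc]
      rw [h3, Finset.inf'_cons hK' (hb := h)]
      set b := a ⊔ y k
      set m := K'.inf' hK' fun j => a ⊔ y j
      have hmm : ((b ⊓ m : NNReal) : ℝ) + ((b ⊔ m : NNReal) : ℝ) = (b:ℝ) + (m:ℝ) := by
        push_cast
        exact min_add_max _ _
      push_cast at hmm ⊢
      linarith

lemma iSup_finset_eq_sup {d : ℕ} (x : Fin d → ℝ) (hx : ∀ j, 0 ≤ x j) (L : Finset (Fin d)) :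
    (⨆ j ∈ L, x j) = ((L.sup (fun j => (⟨x j, hx j⟩ : NNReal)) : NNReal) : ℝ) := by
  set y : Fin d → NNReal := fun j => ⟨x j, hx j⟩ with hy
  apply le_antisymm
  · apply Real.iSup_le _ (NNReal.coe_nonneg _)
    intro j
    apply Real.iSup_le _ (NNReal.coe_nonneg _)
    intro hj
    exact_mod_cast NNReal.coe_le_coe.mpr (Finset.le_sup (f := y) hj)
  · rcases L.eq_empty_or_nonempty with rfl | hL
    · simp
    · obtain ⟨j0, hj0, hsup⟩ := Finset.exists_mem_eq_sup L hL y
      rw [hsup]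
      have h1 : (y j0 : ℝ) = ⨆ _ : j0 ∈ L, x j0 := by
        rw [ciSup_pos hj0]; rfl
      rw [h1]
      exact le_ciSup (f := fun j => ⨆ _ : j ∈ L, x j)
        (Set.Finite.bddAbove (Set.finite_range _)) j0

/-- Lemma A.4 (max-alternation): for nonnegative reals `x 1, ..., x d` and a proper
subset `J` of the index set, the alternating sum over supersets `L ⊇ J` of
`(-1)^(|L \ J| + 1) * max_{j ∈ L} x j` is nonnegative (max over ∅ is 0). -/
theorem max_alternation_nonneg (d : ℕ) (hd : 2 ≤ d) (x : Fin d → ℝ)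
    (hx : ∀ j, 0 ≤ x j) (J : Finset (Fin d)) (hJ : J ≠ Finset.univ) :
    0 ≤ ∑ L ∈ Finset.univ.powerset.filter (fun L => J ⊆ L),
        ((-1 : ℝ)) ^ ((L \ J).card + 1) * (⨆ j ∈ (L : Finset (Fin d)), x j) := by
  set y : Fin d → NNReal := fun j => ⟨x j, hx j⟩ with hy
  set a : NNReal := J.sup y with ha
  have hK : (Jᶜ : Finset (Fin d)).Nonempty := Finset.nonempty_iff_ne_empty.mpr
    (fun h0 => hJ ((Finset.compl_eq_empty_iff J).mp h0))
  have hre : ∑ L ∈ Finset.univ.powerset.filter (fun L => J ⊆ L),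
        ((-1 : ℝ)) ^ ((L \ J).card + 1) * (⨆ j ∈ (L : Finset (Fin d)), x j)
      = ∑ M ∈ (Jᶜ : Finset (Fin d)).powerset, (-1:ℝ)^(M.card + 1) * ((a ⊔ M.sup y : NNReal) : ℝ) := by
    apply Finset.sum_nbij' (i := fun L => L \ J) (j := fun M => J ∪ M)
    · intro L hL
      simp only [Finset.mem_filter, Finset.mem_powerset] at hL
      simp only [Finset.mem_powerset]
      intro t ht
      simp only [Finset.mem_sdiff] at ht
      simp [ht.2]
    · intro M hM
      simp only [Finset.mem_powerset] at hM
      simp [Finset.mem_filter, Finset.mem_powerset, Finset.subset_union_left]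
    · intro L hL
      simp only [Finset.mem_filter, Finset.mem_powerset] at hL
      exact Finset.union_sdiff_of_subset hL.2
    · intro M hM
      simp only [Finset.mem_powerset] at hM
      have hdisj : Disjoint J M := by
        rw [Finset.disjoint_left]
        intro t htJ htM
        have := hM htM
        simp at this
        exact this htJ
      exact Finset.union_sdiff_cancel_left hdisj
    · intro L hL
      simp only [Finset.mem_filter, Finset.mem_powerset] at hL
      rw [iSup_finset_eq_sup x hx L]
      congr 1
      have : L = J ∪ (L \ J) := (Finset.union_sdiff_of_subset hL.2).symm
      rw [show L.sup y = (J ∪ (L \ J)).sup y by rw [← this], Finset.sup_union]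
  rw [hre]
  have h2 : ∑ M ∈ (Jᶜ : Finset (Fin d)).powerset, (-1:ℝ)^(M.card + 1) * ((a ⊔ M.sup y : NNReal) : ℝ)
      = -∑ M ∈ (Jᶜ : Finset (Fin d)).powerset, (-1:ℝ)^M.card * ((a ⊔ M.sup y : NNReal) : ℝ) := by
    rw [← Finset.sum_neg_distrib]
    apply Finset.sum_congr rfl
    intro M hM
    ring
  rw [h2, key_ie y Jᶜ hK a]
  have h3 : (a : ℝ) ≤ ((Jᶜ.inf' hK fun k => a ⊔ y k : NNReal) : ℝ) := by
    exact_mod_cast NNReal.coe_le_coe.mpr (Finset.le_inf' hK _ fun k _ => le_sup_left)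
  linarith
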